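/- Let E = sup_{P∈Θ} E_P be a continuous T-invariant sublinear expectation on (Ω, B_b(Ω)), where Θ is the set of all probabilities dominated by E on bounded measurable functions. Then for each P ∈ Θ there exists a T-invariant probability P' ∈ Θ such that P = P' on the T-invariant σ-algebra I. -/

import Mathlib

open MeasureTheory Filter Function Topology

structure IsHSpace {Ω : Type*} (T : Ω → Ω) (H : Set (Ω → ℝ)) : Prop where
  add_mem : ∀ f ∈ H, ∀ g ∈ H, f + g ∈ H
  smul_mem : ∀ (c : ℝ), ∀ f ∈ H, c • f ∈ H
  one_mem : (fun _ : Ω => (1 : ℝ)) ∈ H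
  comp_mem : ∀ f ∈ H, f ∘ T ∈ H
  abs_mem : ∀ f ∈ H, (fun ω => |f ω|) ∈ H

/-- `E` is a `T`-invariant sublinear expectation on `(Ω, H)`. -/
structure IsISE {Ω : Type*} (T : Ω → Ω) (H : Set (Ω → ℝ)) (E : (Ω → ℝ) → ℝ) : Prop where
  mono : ∀ f ∈ H, ∀ g ∈ H, (∀ ω, f ω ≤ g ω) → E f ≤ E g
  const : ∀ c : ℝ, E (fun _ => c) = c
  subadd : ∀ f ∈ H, ∀ g ∈ H, E (f + g) ≤ E f + E g
  homog : ∀ f ∈ H, ∀ c : ℝ, 0 ≤ c → E (c • f) = c * E f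
  inv : ∀ f ∈ H, E (f ∘ T) = E f

/-- The Birkhoff-type sum `∑_{k=0}^{n-1} f ∘ T^{kd}`. -/
def bsum {Ω : Type*} (T : Ω → Ω) (d : ℕ) (f : Ω → ℝ) (n : ℕ) : Ω → ℝ :=
  fun ω => ∑ k ∈ Finset.range n, f (T^[k * d] ω)

/-- The space of bounded measurable real functions on `Ω`. -/
def Bb (Ω : Type*) [MeasurableSpace Ω] : Set (Ω → ℝ) :=
  {f | Measurable f ∧ ∃ C, ∀ ω, |f ω| ≤ C}

theorem stmt11 {Ω : Type*} [MeasurableSpace Ω] (T : Ω → Ω) (hT : Measurable T)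
    (E : (Ω → ℝ) → ℝ) (hE : IsISE T (Bb Ω) E)
    (Θ : Set (Measure Ω))
    (hΘ : Θ = {P | IsProbabilityMeasure P ∧ ∀ f ∈ Bb Ω, ∫ ω, f ω ∂P ≤ E f})
    (hcont : ∀ A : ℕ → Set Ω, (∀ n, MeasurableSet (A n)) → Antitone A →
      (⋂ n, A n) = ∅ →
      Tendsto (fun n => ⨆ P : Θ, P.1 (A n)) atTop (𝓝 (0 : ENNReal))) :
    ∀ P ∈ Θ, ∃ P' ∈ Θ, Measure.map T P' = P' ∧
      ∀ A : Set Ω, MeasurableSet A → T ⁻¹' A = A → P' A = P A := by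
  intro P hPΘ
  obtain ⟨hPprob, hPdom⟩ : IsProbabilityMeasure P ∧ ∀ f ∈ Bb Ω, ∫ ω, f ω ∂P ≤ E f := by
    rwa [hΘ] at hPΘ
  haveI := hPprob
  -- the Cesàro averages
  set Q : ℕ → Measure Ω := fun k => Measure.map (T^[k]) P with hQdef
  have hTk : ∀ k, Measurable (T^[k]) := fun k => hT.iterate k
  have hQprob : ∀ k, IsProbabilityMeasure (Q k) := fun k =>
    Measure.isProbabilityMeasure_map (hTk k).aemeasurable
  set Pn : ℕ → Measure Ω := fun n =>
    (((n : ENNReal) + 1))⁻¹ • ∑ k ∈ Finset.range (n + 1), Q k with hPndef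
  have hn1 : ∀ n : ℕ, ((n : ENNReal) + 1) ≠ 0 := fun n => by simp
  have hn2 : ∀ n : ℕ, ((n : ENNReal) + 1) ≠ ⊤ := fun n => by
    simp [ENNReal.add_ne_top]
  have hPnapp : ∀ n (A : Set Ω),
      Pn n A = ((n : ENNReal) + 1)⁻¹ * ∑ k ∈ Finset.range (n + 1), Q k A := by
    intro n A
    rw [hPndef]
    simp [Measure.smul_apply, Measure.finset_sum_apply, smul_eq_mul]
  have hPnprob : ∀ n, IsProbabilityMeasure (Pn n) := by
    intro n
    constructor
    rw [hPnapp]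
    have : ∀ k ∈ Finset.range (n + 1), Q k Set.univ = 1 := fun k _ => (hQprob k).measure_univ
    rw [Finset.sum_congr rfl this]
    simp [ENNReal.inv_mul_cancel (hn1 n) (hn2 n)]
  have hPnne : ∀ n (A : Set Ω), Pn n A ≠ ⊤ := fun n A => by
    haveI := hPnprob n; exact measure_ne_top _ _
  -- Bb is closed under composition with T^[k], and E is invariant
  have hBbT : ∀ f ∈ Bb Ω, ∀ k : ℕ, (f ∘ T^[k]) ∈ Bb Ω ∧ E (f ∘ T^[k]) = E f := by
    intro f hf k
    induction k with
    | zero => simpa using hf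
    | succ k ih =>
      have hcomp : f ∘ T^[k + 1] = (f ∘ T^[k]) ∘ T := by
        rw [Function.iterate_succ]; rfl
      constructor
      · rw [hcomp]
        obtain ⟨hm, C, hC⟩ := ih.1
        exact ⟨hm.comp hT, C, fun ω => hC (T ω)⟩
      · rw [hcomp, hE.inv _ ih.1, ih.2]
  -- integrability of bounded measurable functions
  have hInt : ∀ (f : Ω → ℝ), Measurable f → ∀ C : ℝ, (∀ ω, |f ω| ≤ C) →
      ∀ (ν : Measure Ω), IsFiniteMeasure ν → Integrable f ν := by
    intro f hf C hC ν hν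
    haveI := hν
    exact Integrable.mono' (integrable_const C) hf.aestronglyMeasurable
      (Filter.Eventually.of_forall fun ω => by simpa [Real.norm_eq_abs] using hC ω)
  -- each Pn dominates: ∫ f dPn ≤ E f
  have hPnE : ∀ n, ∀ f ∈ Bb Ω, ∫ ω, f ω ∂(Pn n) ≤ E f := by
    intro n f hf
    obtain ⟨hfm, C, hfC⟩ := hf
    have hIntQ : ∀ k ∈ Finset.range (n + 1), Integrable f (Q k) := by
      intro k _
      haveI : IsFiniteMeasure (Q k) := ⟨by rw [(hQprob k).measure_univ]; exact ENNReal.one_lt_top⟩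
      exact hInt f hfm C hfC (Q k) this
    have hQint : ∀ k, ∫ ω, f ω ∂(Q k) ≤ E f := by
      intro k
      have h1 : ∫ ω, f ω ∂(Q k) = ∫ ω, f (T^[k] ω) ∂P := by
        rw [hQdef]
        exact integral_map (hTk k).aemeasurable hfm.aestronglyMeasurable
      rw [h1]
      have h2 := hPdom _ ((hBbT f ⟨hfm, C, hfC⟩ k).1)
      rw [(hBbT f ⟨hfm, C, hfC⟩ k).2] at h2
      exact h2
    rw [hPndef]
    simp only
    rw [integral_smul_measure, integral_finset_sum_measure hIntQ]
    have htr : (((n : ENNReal) + 1)⁻¹).toReal = ((n : ℝ) + 1)⁻¹ := by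
      rw [ENNReal.toReal_inv, ENNReal.toReal_add (by simp) (by simp)]
      simp
    rw [htr, smul_eq_mul]
    have hsum : ∑ k ∈ Finset.range (n + 1), ∫ ω, f ω ∂(Q k) ≤ ((n : ℝ) + 1) * E f := by
      calc ∑ k ∈ Finset.range (n + 1), ∫ ω, f ω ∂(Q k)
          ≤ ∑ _k ∈ Finset.range (n + 1), E f := Finset.sum_le_sum fun k _ => hQint k
        _ = ((n : ℝ) + 1) * E f := by simp [Finset.sum_const]
    have hpos : (0 : ℝ) < (n : ℝ) + 1 := by positivity
    calc ((n : ℝ) + 1)⁻¹ * ∑ k ∈ Finset.range (n + 1), ∫ ω, f ω ∂(Q k)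
        ≤ ((n : ℝ) + 1)⁻¹ * (((n : ℝ) + 1) * E f) := by
          exact mul_le_mul_of_nonneg_left hsum (by positivity)
      _ = E f := by field_simp
  have hPnΘ : ∀ n, Pn n ∈ Θ := by
    intro n
    rw [hΘ]
    exact ⟨hPnprob n, hPnE n⟩
  -- the ultrafilter limit functional
  let U : Ultrafilter ℕ := Ultrafilter.of atTop
  have hUle : (U : Filter ℕ) ≤ atTop := Ultrafilter.of_le _
  have hPnle1 : ∀ n (A : Set Ω), (Pn n A).toReal ≤ 1 := by
    intro n A
    haveI := hPnprob n
    rw [← ENNReal.toReal_one]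
    exact ENNReal.toReal_mono ENNReal.one_ne_top prob_le_one
  have hex : ∀ A : Set Ω, ∃ x, Tendsto (fun n => (Pn n A).toReal) (U : Filter ℕ) (𝓝 x) := by
    intro A
    obtain ⟨x, -, hx⟩ := (isCompact_Icc (a := (0:ℝ)) (b := 1)).ultrafilter_le_nhds
      (U.map fun n => (Pn n A).toReal) (by
        rw [Ultrafilter.coe_map, le_principal_iff, mem_map]
        exact Filter.Eventually.of_forall fun n =>
          ⟨ENNReal.toReal_nonneg, hPnle1 n A⟩)
    exact ⟨x, by rwa [Ultrafilter.coe_map] at hx⟩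
  choose m hm using hex
  have hm0 : ∀ A, 0 ≤ m A := fun A =>
    ge_of_tendsto (hm A) (Filter.Eventually.of_forall fun n => ENNReal.toReal_nonneg)
  have hm1 : ∀ A, m A ≤ 1 := fun A =>
    le_of_tendsto (hm A) (Filter.Eventually.of_forall fun n => hPnle1 n A)
  have hmempty : m ∅ = 0 := by
    refine tendsto_nhds_unique (hm ∅) ?_
    simpa using (tendsto_const_nhds : Tendsto (fun _ : ℕ => (0:ℝ)) (U : Filter ℕ) (𝓝 0))
  have hmuniv : m Set.univ = 1 := by
    refine tendsto_nhds_unique (hm Set.univ) ?_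
    have : ∀ n : ℕ, (Pn n Set.univ).toReal = 1 := fun n => by
      rw [(hPnprob n).measure_univ, ENNReal.toReal_one]
    simpa [this] using (tendsto_const_nhds : Tendsto (fun _ : ℕ => (1:ℝ)) (U : Filter ℕ) (𝓝 1))
  have hmadd : ∀ A B : Set Ω, MeasurableSet B → Disjoint A B → m (A ∪ B) = m A + m B := by
    intro A B hB hd
    refine tendsto_nhds_unique (hm (A ∪ B)) ?_
    have heq : ∀ n, (Pn n (A ∪ B)).toReal = (Pn n A).toReal + (Pn n B).toReal := by
      intro n
      rw [measure_union hd hB, ENNReal.toReal_add (hPnne n A) (hPnne n B)]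
    simpa [heq] using (hm A).add (hm B)
  -- m A is dominated by the upper probability
  have hmV : ∀ A : Set Ω, m A ≤ (⨆ P : Θ, P.1 A).toReal := by
    intro A
    have hVle1 : (⨆ P : Θ, P.1 A) ≤ 1 := by
      refine iSup_le fun P' => ?_
      obtain ⟨ν, hν⟩ := P'
      simp only
      rw [hΘ] at hν
      haveI := hν.1
      exact prob_le_one
    refine le_of_tendsto (hm A) (Filter.Eventually.of_forall fun n => ?_)
    exact ENNReal.toReal_mono (lt_of_le_of_lt hVle1 ENNReal.one_lt_top).ne
      (le_iSup (fun P' : Θ => P'.1 A) ⟨Pn n, hPnΘ n⟩)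
  -- finite additivity over ranges
  have hmfin : ∀ (f : ℕ → Set Ω), (∀ i, MeasurableSet (f i)) → Pairwise (Disjoint on f) →
      ∀ n, m (⋃ i ∈ Finset.range n, f i) = ∑ i ∈ Finset.range n, m (f i) := by
    intro f hfm hd n
    induction n with
    | zero => simpa using hmempty
    | succ n ih =>
      rw [Finset.sum_range_succ, ← ih]
      have hU : (⋃ i ∈ Finset.range (n+1), f i) = (⋃ i ∈ Finset.range n, f i) ∪ f n := by
        rw [Finset.range_add_one, Finset.set_biUnion_insert, Set.union_comm]
      rw [hU]
      refine hmadd _ _ (hfm n) ?_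
      rw [Set.disjoint_left]
      rintro x hx hxn
      obtain ⟨i, hi, hxi⟩ := Set.mem_iUnion₂.1 hx
      exact Set.disjoint_left.1 (hd (Nat.ne_of_lt (Finset.mem_range.1 hi))) hxi hxn
  -- countable additivity of m
  have hCA : ∀ (f : ℕ → Set Ω), (∀ i, MeasurableSet (f i)) → Pairwise (Disjoint on f) →
      HasSum (fun i => m (f i)) (m (⋃ i, f i)) := by
    intro f hfm hd
    set R : ℕ → Set Ω := fun n => ⋃ i, f (i + n) with hRdef
    have hRmeas : ∀ n, MeasurableSet (R n) := fun n => MeasurableSet.iUnion fun i => hfm _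
    have hRanti : Antitone R := by
      intro a b hab x hx
      obtain ⟨i, hi⟩ := Set.mem_iUnion.1 hx
      refine Set.mem_iUnion.2 ⟨i + (b - a), ?_⟩
      have : i + (b - a) + a = i + b := by omega
      rwa [this]
    have hRempty : (⋂ n, R n) = ∅ := by
      ext x
      simp only [Set.mem_iInter, Set.mem_empty_iff_false, iff_false]
      intro hx
      obtain ⟨i, hi⟩ := Set.mem_iUnion.1 (hx 0)
      obtain ⟨j, hj⟩ := Set.mem_iUnion.1 (hx (i + 1))
      exact Set.disjoint_left.1 (hd (by omega : i + 0 ≠ j + (i + 1))) hi hj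
    have hsplit : ∀ n, m (⋃ i, f i) = (∑ i ∈ Finset.range n, m (f i)) + m (R n) := by
      intro n
      have hU : (⋃ i, f i) = (⋃ i ∈ Finset.range n, f i) ∪ R n := by
        ext x
        simp only [Set.mem_iUnion, Set.mem_union, Finset.mem_range, Set.mem_iUnion]
        constructor
        · rintro ⟨j, hj⟩
          rcases lt_or_ge j n with h | h
          · exact Or.inl ⟨j, h, hj⟩
          · refine Or.inr (Set.mem_iUnion.2 ⟨j - n, ?_⟩)
            have : j - n + n = j := by omega
            rwa [this]
        · rintro (⟨j, _, hj⟩ | hR)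
          · exact ⟨j, hj⟩
          · obtain ⟨j, hj⟩ := Set.mem_iUnion.1 hR
            exact ⟨j + n, hj⟩
      have hdis : Disjoint (⋃ i ∈ Finset.range n, f i) (R n) := by
        rw [Set.disjoint_left]
        rintro x hx hxR
        obtain ⟨i, hi, hxi⟩ := Set.mem_iUnion₂.1 hx
        obtain ⟨j, hj⟩ := Set.mem_iUnion.1 hxR
        have hlt := Finset.mem_range.1 hi
        exact Set.disjoint_left.1 (hd (by omega : i ≠ j + n)) hxi hj
      rw [hU, hmadd _ _ (hRmeas n) hdis, hmfin f hfm hd n]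
    have hR0 : Tendsto (fun n => m (R n)) atTop (𝓝 0) := by
      have hV := hcont R hRmeas hRanti hRempty
      have hVt : Tendsto (fun n => (⨆ P : Θ, P.1 (R n)).toReal) atTop (𝓝 0) := by
        have := (ENNReal.tendsto_toReal (by simp : (0 : ENNReal) ≠ ⊤)).comp hV
        simpa [Function.comp_def] using this
      exact squeeze_zero (fun n => hm0 _) (fun n => hmV (R n)) hVt
    have hTend : Tendsto (fun n => ∑ i ∈ Finset.range n, m (f i)) atTop (𝓝 (m (⋃ i, f i))) := by
      have heq : (fun n => ∑ i ∈ Finset.range n, m (f i))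
          = fun n => m (⋃ i, f i) - m (R n) := by
        funext n
        rw [hsplit n]
        ring
      rw [heq]
      simpa using tendsto_const_nhds.sub hR0
    have hsummable : Summable (fun i => m (f i)) :=
      summable_of_sum_range_le (fun i => hm0 _)
        (fun n => by rw [← hmfin f hfm hd n]; exact hm1 _)
    have hh := hsummable.hasSum
    have heq := tendsto_nhds_unique hh.tendsto_sum_nat hTend
    rwa [heq] at hh
  -- the candidate invariant measure
  set μ : Measure Ω := Measure.ofMeasurable (fun A _ => ENNReal.ofReal (m A))
    (by rw [hmempty]; exact ENNReal.ofReal_zero)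
    (by
      intro f hfm hd
      have h := hCA f hfm hd
      rw [← h.tsum_eq, ENNReal.ofReal_tsum_of_nonneg (fun i => hm0 _) h.summable]) with hμdef
  have hμapp : ∀ A : Set Ω, MeasurableSet A → μ A = ENNReal.ofReal (m A) := fun A hA =>
    Measure.ofMeasurable_apply A hA
  have hμprob : IsProbabilityMeasure μ :=
    ⟨by rw [hμapp _ MeasurableSet.univ, hmuniv, ENNReal.ofReal_one]⟩
  -- real formula for Pn
  have hQne : ∀ k (A : Set Ω), Q k A ≠ ⊤ := fun k A => by
    have h1 : Q k A ≤ 1 := le_trans (measure_mono (Set.subset_univ A))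
      (le_of_eq (hQprob k).measure_univ)
    exact (lt_of_le_of_lt h1 ENNReal.one_lt_top).ne
  have hQ01 : ∀ k (A : Set Ω), 0 ≤ (Q k A).toReal ∧ (Q k A).toReal ≤ 1 := by
    intro k A
    refine ⟨ENNReal.toReal_nonneg, ?_⟩
    rw [← ENNReal.toReal_one]
    refine ENNReal.toReal_mono ENNReal.one_ne_top ?_
    exact le_trans (measure_mono (Set.subset_univ A)) (le_of_eq (hQprob k).measure_univ)
  have hPnReal : ∀ n (A : Set Ω), (Pn n A).toReal
      = ((n : ℝ) + 1)⁻¹ * ∑ k ∈ Finset.range (n + 1), (Q k A).toReal := by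
    intro n A
    have hconst : (((n : ENNReal) + 1)⁻¹).toReal = ((n : ℝ) + 1)⁻¹ := by
      rw [ENNReal.toReal_inv]
      congr 1
    rw [hPnapp, ENNReal.toReal_mul, hconst, ENNReal.toReal_sum (fun k _ => hQne k A)]
  -- the shift identity
  have hQshift : ∀ k (A : Set Ω), MeasurableSet A → Q k (T ⁻¹' A) = Q (k+1) A := by
    intro k A hA
    rw [hQdef]
    simp only
    rw [Measure.map_apply (hTk k) (hT hA), Measure.map_apply (hTk (k+1)) hA,
      Function.iterate_succ', Set.preimage_comp]
  -- invariance of m on measurable sets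
  have hmT : ∀ A : Set Ω, MeasurableSet A → m (T ⁻¹' A) = m A := by
    intro A hA
    refine tendsto_nhds_unique (hm (T ⁻¹' A)) ?_
    have hkey : ∀ n, (Pn n (T ⁻¹' A)).toReal = (Pn n A).toReal
        + ((n : ℝ) + 1)⁻¹ * ((Q (n+1) A).toReal - (Q 0 A).toReal) := by
      intro n
      rw [hPnReal, hPnReal]
      rw [Finset.sum_congr rfl (fun k _ => by rw [hQshift k A hA] :
        ∀ k ∈ Finset.range (n+1), (Q k (T ⁻¹' A)).toReal = (Q (k+1) A).toReal)]
      have h2 := Finset.sum_range_succ' (fun k => (Q k A).toReal) (n+1)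
      have h3 := Finset.sum_range_succ (fun k => (Q k A).toReal) (n+1)
      have h4 : ∑ k ∈ Finset.range (n + 1), (Q (k+1) A).toReal
          = ∑ k ∈ Finset.range (n + 1), (Q k A).toReal
            + ((Q (n+1) A).toReal - (Q 0 A).toReal) := by
        linarith
      rw [h4]
      ring
    have hd0 : Tendsto (fun n : ℕ => ((n : ℝ) + 1)⁻¹ * ((Q (n+1) A).toReal - (Q 0 A).toReal))
        atTop (𝓝 0) := by
      have hb : Tendsto (fun n : ℕ => ((n : ℝ) + 1)⁻¹ * 2) atTop (𝓝 0) := by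
        have h7 : Tendsto (fun n : ℕ => ((n : ℝ) + 1)⁻¹) atTop (𝓝 0) := by
          simpa [one_div] using tendsto_one_div_add_atTop_nhds_zero_nat (𝕜 := ℝ)
        simpa using h7.mul_const 2
      refine squeeze_zero_norm ?_ hb
      · intro n
        rw [Real.norm_eq_abs, abs_mul]
        have h1 : |((n : ℝ) + 1)⁻¹| = ((n : ℝ) + 1)⁻¹ := abs_of_nonneg (by positivity)
        rw [h1]
        have h5 := hQ01 (n+1) A
        have h6 := hQ01 0 A
        have : |(Q (n+1) A).toReal - (Q 0 A).toReal| ≤ 2 := by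
          rw [abs_le]
          constructor <;> linarith [h5.1, h5.2, h6.1, h6.2]
        exact mul_le_mul_of_nonneg_left this (by positivity)
    have hcomb := (hm A).add (hd0.mono_left hUle)
    rw [add_zero] at hcomb
    exact Tendsto.congr (fun n => (hkey n).symm) hcomb
  have hμT : Measure.map T μ = μ := by
    refine Measure.ext fun A hA => ?_
    rw [Measure.map_apply hT hA, hμapp _ (hT hA), hμapp _ hA, hmT A hA]
  -- agreement on invariant sets
  have hiter : ∀ A : Set Ω, T ⁻¹' A = A → ∀ k, T^[k] ⁻¹' A = A := by
    intro A hA k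
    induction k with
    | zero => simp
    | succ k ih => rw [Function.iterate_succ, Set.preimage_comp, ih, hA]
  have hagree : ∀ A : Set Ω, MeasurableSet A → T ⁻¹' A = A → μ A = P A := by
    intro A hA hinv
    have hQA : ∀ k, Q k A = P A := fun k => by
      rw [hQdef]
      simp only
      rw [Measure.map_apply (hTk k) hA, hiter A hinv k]
    have hPnA : ∀ n, Pn n A = P A := by
      intro n
      rw [hPnapp, Finset.sum_congr rfl (fun k _ => hQA k), Finset.sum_const,
        Finset.card_range, nsmul_eq_mul, ← mul_assoc]
      have : ((n : ENNReal) + 1)⁻¹ * ((n : ℕ) + 1 : ℕ) = 1 := by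
        push_cast
        exact ENNReal.inv_mul_cancel (hn1 n) (hn2 n)
      rw [this, one_mul]
    have hmA : m A = (P A).toReal :=
      tendsto_nhds_unique (hm A) (by simp only [hPnA]; exact tendsto_const_nhds)
    have hPA : P A ≠ ⊤ := (lt_of_le_of_lt (le_trans (measure_mono (Set.subset_univ A))
      (le_of_eq hPprob.measure_univ)) ENNReal.one_lt_top).ne
    rw [hμapp _ hA, hmA, ENNReal.ofReal_toReal hPA]
  -- Ω is nonempty (since P is a probability measure)
  have hNE : Nonempty Ω := by
    by_contra h
    rw [not_nonempty_iff] at h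
    have h1 : (Set.univ : Set Ω) = ∅ := Set.univ_eq_empty_iff.2 h
    have h2 := hPprob.measure_univ
    rw [h1, measure_empty] at h2
    exact zero_ne_one h2
  haveI hμfin : IsFiniteMeasure μ :=
    ⟨by rw [hμprob.measure_univ]; exact ENNReal.one_lt_top⟩
  have hPnfin : ∀ n, IsFiniteMeasure (Pn n) := fun n =>
    ⟨by rw [(hPnprob n).measure_univ]; exact ENNReal.one_lt_top⟩
  -- μ is dominated by E
  have hμE : ∀ f ∈ Bb Ω, ∫ ω, f ω ∂μ ≤ E f := by
    intro f hf
    obtain ⟨hfm, C, hfC⟩ := hf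
    have hC0 : 0 ≤ C := le_trans (abs_nonneg _) (hfC (Classical.arbitrary Ω))
    have key : ∀ k : ℕ, ∫ ω, f ω ∂μ ≤ E f + ((k : ℝ) + 1)⁻¹ := by
      intro k
      set c : ℝ := ((k : ℝ) + 1) with hc
      have hcpos : 0 < c := by rw [hc]; positivity
      have hc1 : (1 : ℝ) ≤ c := by rw [hc]; simp
      have hcinv : c⁻¹ ≤ 1 := by
        rw [← inv_one]
        exact inv_anti₀ one_pos hc1
      set g : Ω → ℝ := fun ω => c⁻¹ * (⌊c * f ω⌋ : ℝ) with hg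
      have hgm : Measurable g := by
        apply Measurable.const_mul
        exact (measurable_from_top : Measurable (fun z : ℤ => (z : ℝ))).comp
          ((measurable_const.mul hfm).floor)
      have hfin : (Set.range g).Finite := by
        have hsub : Set.range g ⊆
            (fun z : ℤ => c⁻¹ * (z : ℝ)) '' (Set.Icc ⌊-(c * C)⌋ ⌊c * C⌋) := by
          rintro x ⟨ω, rfl⟩
          refine ⟨⌊c * f ω⌋, ⟨?_, ?_⟩, rfl⟩
          · apply Int.floor_le_floor
            nlinarith [(abs_le.1 (hfC ω)).1]
          · apply Int.floor_le_floor
            nlinarith [(abs_le.1 (hfC ω)).2]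
        exact Set.Finite.subset ((Set.finite_Icc _ _).image _) hsub
      set G : SimpleFunc Ω ℝ := ⟨g, fun x => hgm (measurableSet_singleton x), hfin⟩ with hG
      have hgle : ∀ ω, g ω ≤ f ω := by
        intro ω
        have h1 : (⌊c * f ω⌋ : ℝ) ≤ c * f ω := Int.floor_le _
        calc g ω = c⁻¹ * (⌊c * f ω⌋ : ℝ) := rfl
          _ ≤ c⁻¹ * (c * f ω) := mul_le_mul_of_nonneg_left h1 (by positivity)
          _ = f ω := by field_simp
      have hfle : ∀ ω, f ω ≤ g ω + c⁻¹ := by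
        intro ω
        have h1 : c * f ω - 1 ≤ (⌊c * f ω⌋ : ℝ) := le_of_lt (Int.sub_one_lt_floor _)
        have hkey : c * f ω ≤ c * (g ω + c⁻¹) := by
          rw [hg]
          simp only
          rw [mul_add, ← mul_assoc, mul_inv_cancel₀ hcpos.ne', one_mul]
          linarith
        exact le_of_mul_le_mul_left hkey hcpos
      have hgB : ∀ ω, |g ω| ≤ C + 1 := by
        intro ω
        have h1 := (abs_le.1 (hfC ω)).1
        have h2 := (abs_le.1 (hfC ω)).2
        have h3 := hgle ω
        have h4 := hfle ω
        rw [abs_le]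
        constructor <;> linarith
      have hgBb : g ∈ Bb Ω := ⟨hgm, C + 1, hgB⟩
      have hGint : ∀ n, Integrable g (Pn n) := fun n => hInt g hgm (C+1) hgB (Pn n) (hPnfin n)
      have hGintμ : Integrable g μ := hInt g hgm (C+1) hgB μ hμfin
      have hfib : ∀ x : ℝ, (μ (g ⁻¹' {x})).toReal = m (g ⁻¹' {x}) := fun x => by
        rw [hμapp _ (hgm (measurableSet_singleton x)), ENNReal.toReal_ofReal (hm0 _)]
      have e1 : ∀ n, ∫ ω, g ω ∂(Pn n) = ∑ x ∈ G.range, ((Pn n) (g ⁻¹' {x})).toReal * x := by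
        intro n
        have := SimpleFunc.integral_eq_sum G (hGint n)
        simp only [smul_eq_mul, measureReal_def] at this; exact this
      have e2 : ∫ ω, g ω ∂μ = ∑ x ∈ G.range, m (g ⁻¹' {x}) * x := by
        have := SimpleFunc.integral_eq_sum G hGintμ
        simp only [smul_eq_mul] at this
        rw [show (∫ ω, g ω ∂μ) = ∫ ω, G ω ∂μ from rfl, this]
        exact Finset.sum_congr rfl fun x _ => by
          rw [show (⇑G ⁻¹' {x} : Set Ω) = g ⁻¹' {x} from rfl, measureReal_def, hfib]
      have hTend : Tendsto (fun n => ∫ ω, g ω ∂(Pn n)) (U : Filter ℕ)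
          (𝓝 (∫ ω, g ω ∂μ)) := by
        rw [e2]
        have := tendsto_finset_sum (f := fun (x : ℝ) (n : ℕ) =>
            ((Pn n) (g ⁻¹' {x})).toReal * x) (x := (U : Filter ℕ))
            (a := fun x => m (g ⁻¹' {x}) * x) G.range
            (fun x _ => (hm (g ⁻¹' {x})).mul_const x)
        refine Tendsto.congr (fun n => ?_) this
        rw [e1 n]
      have h1 : ∫ ω, g ω ∂μ ≤ E g :=
        le_of_tendsto hTend (Filter.Eventually.of_forall fun n => hPnE n g hgBb)
      have h2 : E g ≤ E f := hE.mono g hgBb f ⟨hfm, C, hfC⟩ hgle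
      have h3 : ∫ ω, f ω ∂μ ≤ ∫ ω, g ω ∂μ + c⁻¹ := by
        have hif : Integrable f μ := hInt f hfm C hfC μ hμfin
        have hconst : Integrable (fun _ : Ω => c⁻¹) μ :=
          hInt (fun _ => c⁻¹) measurable_const |c⁻¹| (fun _ => le_refl _) μ hμfin
        have hig : Integrable (fun ω => g ω + c⁻¹) μ := hGintμ.add hconst
        calc ∫ ω, f ω ∂μ ≤ ∫ ω, (g ω + c⁻¹) ∂μ := integral_mono hif hig hfle
          _ = ∫ ω, g ω ∂μ + c⁻¹ := by
            rw [integral_add hGintμ hconst, integral_const, measureReal_def, hμprob.measure_univ]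
            simp
      linarith
    have ht : Tendsto (fun k : ℕ => E f + ((k : ℝ) + 1)⁻¹) atTop (𝓝 (E f)) := by
      have h7 : Tendsto (fun k : ℕ => ((k : ℝ) + 1)⁻¹) atTop (𝓝 0) := by
        simpa [one_div] using tendsto_one_div_add_atTop_nhds_zero_nat (𝕜 := ℝ)
      simpa using tendsto_const_nhds.add h7
    exact ge_of_tendsto ht (Filter.Eventually.of_forall key)
  refine ⟨μ, ?_, hμT, fun A hA hinv => hagree A hA hinv⟩
  rw [hΘ]
  exact ⟨hμprob, hμE⟩
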